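/- Let P1000(k) = 3^(k-1), and let P909, P727 satisfy P909(1) = 1, P727(1) = 1, P727(2) = 3, P909(k+1) = P727(k) + 2*P1000(k) for k ≥ 1, and P727(k+1) = P909(k) + 2*P909(k-1) + 2*P1000(k-1) for k ≥ 2. Then P727(k)/3^(k-1) tends to 8/11 as k → ∞. -/

import Mathlib

open Filter

theorem disk_move_limit_727 (P1000 P909 P727 : ℕ → ℕ)
    (h1000 : ∀ k ≥ 1, P1000 k = 3 ^ (k - 1))
    (h909_1 : P909 1 = 1) (h727_1 : P727 1 = 1) (h727_2 : P727 2 = 3)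
    (h909 : ∀ k ≥ 1, P909 (k + 1) = P727 k + 2 * P1000 k)
    (h727 : ∀ k ≥ 2, P727 (k + 1) = P909 k + 2 * P909 (k - 1) + 2 * P1000 (k - 1)) :
    Tendsto (fun k => (P727 k : ℝ) / (3 : ℝ) ^ (k - 1)) atTop (nhds (8 / 11)) := by
  have p1000 : ∀ n : ℕ, P1000 (n + 1) = 3 ^ n := fun n => by
    simpa using h1000 (n + 1) (by omega)
  have p909_2 : P909 2 = 3 := by
    have := h909 1 le_rfl
    rw [this, h727_1, p1000 0]; norm_num
  have p727_3 : P727 3 = 7 := by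
    have := h727 2 le_rfl
    simp only [show (2:ℕ) - 1 = 1 from rfl] at this
    rw [this, p909_2, h909_1, p1000 0]; norm_num
  have hrec : ∀ n : ℕ, P727 (n + 4) = P727 (n + 2) + 2 * P727 (n + 1) + 16 * 3 ^ n := by
    intro n
    have A : P727 (n + 4) = P909 (n + 3) + 2 * P909 (n + 2) + 2 * P1000 (n + 2) :=
      h727 (n + 3) (by omega)
    have B : P909 (n + 3) = P727 (n + 2) + 2 * P1000 (n + 2) := h909 (n + 2) (by omega)
    have C : P909 (n + 2) = P727 (n + 1) + 2 * P1000 (n + 1) := h909 (n + 1) (by omega)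
    rw [A, B, C, p1000 (n + 1), p1000 n, pow_succ]
    ring
  have bound : ∀ n : ℕ,
      |(P727 (n + 1) : ℝ) - 8 / 11 * 3 ^ n| ≤ 2 ^ n ∧
      |(P727 (n + 2) : ℝ) - 8 / 11 * 3 ^ (n + 1)| ≤ 2 ^ (n + 1) ∧
      |(P727 (n + 3) : ℝ) - 8 / 11 * 3 ^ (n + 2)| ≤ 2 ^ (n + 2) := by
    intro n
    induction n with
    | zero =>
      refine ⟨?_, ?_, ?_⟩
      · rw [h727_1]; rw [abs_le]; constructor <;> norm_num
      · rw [h727_2]; rw [abs_le]; constructor <;> norm_num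
      · rw [p727_3]; rw [abs_le]; constructor <;> norm_num
    | succ n ih =>
      obtain ⟨i1, i2, i3⟩ := ih
      refine ⟨i2, i3, ?_⟩
      have key : (P727 (n + 4) : ℝ) - 8 / 11 * 3 ^ (n + 3) =
          ((P727 (n + 2) : ℝ) - 8 / 11 * 3 ^ (n + 1)) +
          2 * ((P727 (n + 1) : ℝ) - 8 / 11 * 3 ^ n) := by
        rw [hrec n]; push_cast; ring
      have : |(P727 (n + 4) : ℝ) - 8 / 11 * 3 ^ (n + 3)| ≤ 2 ^ (n + 1) + 2 * 2 ^ n := by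
        rw [key]
        calc |((P727 (n + 2) : ℝ) - 8 / 11 * 3 ^ (n + 1)) +
              2 * ((P727 (n + 1) : ℝ) - 8 / 11 * 3 ^ n)|
            ≤ |(P727 (n + 2) : ℝ) - 8 / 11 * 3 ^ (n + 1)| +
              |2 * ((P727 (n + 1) : ℝ) - 8 / 11 * 3 ^ n)| := abs_add_le _ _
          _ ≤ 2 ^ (n + 1) + 2 * 2 ^ n := by
              rw [abs_mul, abs_two]
              exact add_le_add i2 (by linarith)
      calc |(P727 (n + 4) : ℝ) - 8 / 11 * 3 ^ (n + 3)| ≤ 2 ^ (n + 1) + 2 * 2 ^ n := this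
        _ = 2 ^ (n + 2) := by ring
        _ ≤ 2 ^ (n + 3) := by
            have h2 : (0:ℝ) < 2 ^ (n + 2) := by positivity
            calc (2:ℝ) ^ (n + 2) = 2 ^ (n + 2) * 1 := by ring
              _ ≤ 2 ^ (n + 2) * 2 := by linarith
              _ = 2 ^ (n + 3) := by ring
  have lim0 : Tendsto (fun n : ℕ => (P727 (n + 1) : ℝ) / 3 ^ n - 8 / 11) atTop (nhds 0) := by
    refine squeeze_zero_norm (fun n => ?_)
      (tendsto_pow_atTop_nhds_zero_of_lt_one (r := (2:ℝ)/3) (by norm_num) (by norm_num))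
    ·
      have h3 : (0:ℝ) < 3 ^ n := by positivity
      have hb := (bound n).1
      rw [Real.norm_eq_abs, show (P727 (n + 1) : ℝ) / 3 ^ n - 8 / 11 =
        ((P727 (n + 1) : ℝ) - 8 / 11 * 3 ^ n) / 3 ^ n by field_simp, abs_div,
        abs_of_pos h3, div_pow]
      exact div_le_div_of_nonneg_right hb h3.le |>.trans_eq rfl
  have lim1 : Tendsto (fun n : ℕ => (P727 (n + 1) : ℝ) / 3 ^ n) atTop (nhds (8 / 11)) := by
    have := lim0.add_const (8 / 11)
    simpa using this
  rw [← tendsto_add_atTop_iff_nat 1]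
  simpa using lim1
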